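/- Let X be a real random variable with bounded support, so that −∞ < l < r < ∞. Then for every γ ≥ 1, ((r − l)^{1/γ} − H_X(γ)^{1/γ})^γ ≤ K_X(γ) ≤ ((r − l)^{1/γ} + H_X(γ)^{1/γ})^γ. -/

import Mathlib

open MeasureTheory ProbabilityTheory Set
open scoped ENNReal

/-- The (essential) support interval of a CDF `F`: the set where `0 < F x < 1`,
which coincides (up to endpoints) with the interval `(l, r)` where
`l = inf {x : F x > 0}` and `r = sup {x : 1 - F x > 0}`. -/
def cigfSupport (F : ℝ → ℝ) : Set ℝ := {x | 0 < F x ∧ F x < 1}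

/-- The cumulative information generating function
`G_X(α, β) = ∫_l^r F(x)^α (1 - F(x))^β dx`. -/
noncomputable def cigf (F : ℝ → ℝ) (α β : ℝ) : ℝ :=
  ∫ x in cigfSupport F, F x ^ α * (1 - F x) ^ β

/-- `(α, β) ∈ D_X`, i.e. `G_X(α, β) < ∞`. -/
def memD (F : ℝ → ℝ) (α β : ℝ) : Prop :=
  IntegrableOn (fun x => F x ^ α * (1 - F x) ^ β) (cigfSupport F)

/-- The CDF of a random variable `X` under the probability measure `P`. -/
noncomputable def rvCDF {Ω : Type*} [MeasurableSpace Ω] (P : Measure Ω) (X : Ω → ℝ) (x : ℝ) : ℝ :=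
  (P {ω | X ω ≤ x}).toReal

/-- The CDF of a probability measure on `ℝ`. -/
noncomputable def cdfOf (μ : Measure ℝ) (x : ℝ) : ℝ := (μ (Iic x)).toReal

/-- Minkowski-type bounds: for a random variable with bounded support
`(l, r)` and `γ ≥ 1`,
`((r-l)^(1/γ) - H_X(γ)^(1/γ))^γ ≤ K_X(γ) ≤ ((r-l)^(1/γ) + H_X(γ)^(1/γ))^γ`,
where `H_X(γ) = ∫_l^r F(x)^γ dx` and `K_X(γ) = ∫_l^r (1-F(x))^γ dx`. -/
theorem stmt10 (μ : Measure ℝ) [IsProbabilityMeasure μ]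
    (l r : ℝ) (hlr : l < r)
    (hl : IsGLB {x | 0 < cdfOf μ x} l) (hr : IsLUB {x | cdfOf μ x < 1} r)
    (γ : ℝ) (hγ : 1 ≤ γ) :
    ((r - l) ^ (1/γ) - (∫ x in Ioo l r, cdfOf μ x ^ γ) ^ (1/γ)) ^ γ ≤
        ∫ x in Ioo l r, (1 - cdfOf μ x) ^ γ ∧
    ∫ x in Ioo l r, (1 - cdfOf μ x) ^ γ ≤
        ((r - l) ^ (1/γ) + (∫ x in Ioo l r, cdfOf μ x ^ γ) ^ (1/γ)) ^ γ := by
  have hγ0 : (0:ℝ) < γ := lt_of_lt_of_le zero_lt_one hγ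
  set F : ℝ → ℝ := cdfOf μ with hF
  have hF0 : ∀ x, 0 ≤ F x := fun x => ENNReal.toReal_nonneg
  have hF1 : ∀ x, F x ≤ 1 := by
    intro x
    have := measure_mono (subset_univ (Iic x)) (μ := μ)
    simpa [cdfOf, hF] using ENNReal.toReal_mono (by simp) this
  have hFmono : Monotone F := by
    intro a b hab
    exact ENNReal.toReal_mono (by simp) (measure_mono (Iic_subset_Iic.2 hab))
  have hFmeas : Measurable F := hFmono.measurable
  set ν : Measure ℝ := volume.restrict (Ioo l r) with hν
  have hνuniv : ν univ = ENNReal.ofReal (r - l) := by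
    simp [hν, Real.volume_Ioo]
  set f : ℝ → ℝ≥0∞ := fun x => ENNReal.ofReal (F x) with hf
  set g : ℝ → ℝ≥0∞ := fun x => ENNReal.ofReal (1 - F x) with hg
  have hfg : ∀ x, f x + g x = 1 := by
    intro x
    rw [hf, hg, ← ENNReal.ofReal_add (hF0 x) (by linarith [hF1 x])]
    simp
  have hfmeas : AEMeasurable f ν := (ENNReal.measurable_ofReal.comp hFmeas).aemeasurable
  have hgmeas : AEMeasurable g ν :=
    (ENNReal.measurable_ofReal.comp (measurable_const.sub hFmeas)).aemeasurable
  -- lintegral forms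
  set A : ℝ≥0∞ := ∫⁻ x, f x ^ γ ∂ν with hA
  set B : ℝ≥0∞ := ∫⁻ x, g x ^ γ ∂ν with hB
  have hf1 : ∀ x, f x ^ γ ≤ 1 := by
    intro x
    refine ENNReal.rpow_le_one ?_ hγ0.le
    simp [hf, ENNReal.ofReal_le_one, hF1 x]
  have hg1 : ∀ x, g x ^ γ ≤ 1 := by
    intro x
    refine ENNReal.rpow_le_one ?_ hγ0.le
    rw [hg, ENNReal.ofReal_le_one]; linarith [hF0 x]
  have hAle : A ≤ ENNReal.ofReal (r - l) := by
    rw [← hνuniv, ← lintegral_one (μ := ν), hA]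
    exact lintegral_mono fun x => hf1 x
  have hBle : B ≤ ENNReal.ofReal (r - l) := by
    rw [← hνuniv, ← lintegral_one (μ := ν), hB]
    exact lintegral_mono fun x => hg1 x
  have hAtop : A ≠ ⊤ := (lt_of_le_of_lt hAle ENNReal.ofReal_lt_top).ne
  have hBtop : B ≠ ⊤ := (lt_of_le_of_lt hBle ENNReal.ofReal_lt_top).ne
  -- integrals equal toReal of lintegrals
  have hH : (∫ x in Ioo l r, F x ^ γ) = A.toReal := by
    rw [MeasureTheory.integral_eq_lintegral_of_nonneg_ae
      (Filter.Eventually.of_forall fun x => Real.rpow_nonneg (hF0 x) γ)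
      (((Real.continuous_rpow_const hγ0.le).measurable.comp hFmeas).aestronglyMeasurable)]
    congr 1
    refine lintegral_congr fun x => ?_
    rw [hf, ← ENNReal.ofReal_rpow_of_nonneg (hF0 x) hγ0.le]
  have hK : (∫ x in Ioo l r, (1 - F x) ^ γ) = B.toReal := by
    rw [MeasureTheory.integral_eq_lintegral_of_nonneg_ae
      (Filter.Eventually.of_forall fun x => Real.rpow_nonneg (by linarith [hF1 x]) γ)
      (((Real.continuous_rpow_const hγ0.le).measurable.comp (show Measurable (fun x => (1:ℝ) - F x) from measurable_const.sub hFmeas)).aestronglyMeasurable)]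
    congr 1
    refine lintegral_congr fun x => ?_
    rw [hg, ← ENNReal.ofReal_rpow_of_nonneg (by linarith [hF1 x]) hγ0.le]
  set H : ℝ := A.toReal with hHdef
  set K : ℝ := B.toReal with hKdef
  have hH0 : 0 ≤ H := ENNReal.toReal_nonneg
  have hK0 : 0 ≤ K := ENNReal.toReal_nonneg
  have hHle : H ≤ r - l := by
    rw [hHdef]
    calc A.toReal ≤ (ENNReal.ofReal (r - l)).toReal :=
          ENNReal.toReal_mono (by simp) hAle
      _ = r - l := ENNReal.toReal_ofReal (by linarith)
  have hKle : K ≤ r - l := by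
    rw [hKdef]
    calc B.toReal ≤ (ENNReal.ofReal (r - l)).toReal :=
          ENNReal.toReal_mono (by simp) hBle
      _ = r - l := ENNReal.toReal_ofReal (by linarith)
  -- Minkowski
  have hmink : (r - l) ^ (1/γ) ≤ H ^ (1/γ) + K ^ (1/γ) := by
    have h1 : (∫⁻ x, (f + g) x ^ γ ∂ν) = ENNReal.ofReal (r - l) := by
      rw [← hνuniv, ← lintegral_one (μ := ν)]
      refine lintegral_congr fun x => ?_
      simp [hfg x]
    have h2 := ENNReal.lintegral_Lp_add_le hfmeas hgmeas hγ (μ := ν)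
    rw [h1, ← hA, ← hB] at h2
    have hArep : A = ENNReal.ofReal H := by
      rw [hHdef, ENNReal.ofReal_toReal hAtop]
    have hBrep : B = ENNReal.ofReal K := by
      rw [hKdef, ENNReal.ofReal_toReal hBtop]
    have hinv : (0:ℝ) ≤ 1/γ := by positivity
    rw [hArep, hBrep, ENNReal.ofReal_rpow_of_nonneg (by linarith) hinv,
      ENNReal.ofReal_rpow_of_nonneg hH0 hinv,
      ENNReal.ofReal_rpow_of_nonneg hK0 hinv,
      ← ENNReal.ofReal_add (Real.rpow_nonneg hH0 _) (Real.rpow_nonneg hK0 _)] at h2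
    exact (ENNReal.ofReal_le_ofReal_iff (by positivity)).mp h2
  have hd0 : 0 ≤ (r - l) ^ (1/γ) - H ^ (1/γ) := by
    have := Real.rpow_le_rpow hH0 hHle (by positivity : (0:ℝ) ≤ 1/γ)
    linarith
  rw [hH, hK]
  constructor
  · have hdK : (r - l) ^ (1/γ) - H ^ (1/γ) ≤ K ^ (1/γ) := by linarith
    calc ((r - l) ^ (1/γ) - H ^ (1/γ)) ^ γ
        ≤ (K ^ (1/γ)) ^ γ := Real.rpow_le_rpow hd0 hdK hγ0.le
      _ = K := by rw [one_div, Real.rpow_inv_rpow hK0 hγ0.ne']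
  · have h1 : K = ((K) ^ (1/γ)) ^ γ := by
      rw [one_div, Real.rpow_inv_rpow hK0 hγ0.ne']
    rw [h1]
    refine Real.rpow_le_rpow (Real.rpow_nonneg hK0 _) ?_ hγ0.le
    have hKr : K ^ (1/γ) ≤ (r - l) ^ (1/γ) :=
      Real.rpow_le_rpow hK0 hKle (by positivity)
    have hHnn : 0 ≤ H ^ (1/γ) := Real.rpow_nonneg hH0 _
    linarith
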